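/- Let M and N be Σ-monoids and let H be the set of Σ-monoid homomorphisms M → N. For a family (f_i)_{i∈ℕ} in H, declare Σ_i f_i to be defined iff Σ_i f_i(x) is defined in N for every x ∈ M, in which case its value is the function x ↦ Σ_i f_i(x). Then: (a) whenever Σ_i f_i is defined, the function x ↦ Σ_i f_i(x) is again a Σ-monoid homomorphism M → N; (b) H, with the constant-zero function as zero and this partial sum, is a Σ-monoid. -/

import Mathlib

/-- A Σ-monoid: a set with a partial countable sum, represented via `Option`. -/
structure SigmaMonoid (M : Type) where
  zero : M
  sum : (ℕ → M) → Option M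
  sum_unit : ∀ (x : ℕ → M) (j : ℕ), (∀ i, i ≠ j → x i = zero) → sum x = some (x j)
  sum_perm : ∀ (I J : Set ℕ) (σ : ↥(Iᶜ) ≃ ↥(Jᶜ)) (x y : ℕ → M),
      (∀ i ∈ I, x i = zero) → (∀ j ∈ J, y j = zero) →
      (∀ i : ↥(Iᶜ), x i.1 = y (σ i).1) → sum x = sum y
  sum_assoc : ∀ (σ : ℕ × ℕ ≃ ℕ) (x s : ℕ → M),
      (∀ j, sum (fun k => x (σ (j, k))) = some (s j)) → sum x = sum s
  sum_assoc_inner : ∀ (σ : ℕ × ℕ ≃ ℕ) (x : ℕ → M) (v : M),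
      sum x = some v → ∀ j, ∃ w, sum (fun k => x (σ (j, k))) = some w

/-- The (partial) binary sum `x + y`, i.e. the sum of the family `(x, y, 0, 0, …)`. -/
def SigmaMonoid.add {M : Type} (S : SigmaMonoid M) (x y : M) : Option M :=
  S.sum (fun n => if n = 0 then x else if n = 1 then y else S.zero)

/-- A Σ-monoid homomorphism. -/
def SigmaHom {M N : Type} (S : SigmaMonoid M) (T : SigmaMonoid N) (f : M → N) : Prop :=
  f S.zero = T.zero ∧
  ∀ (x : ℕ → M) (v : M), S.sum x = some v → T.sum (fun i => f (x i)) = some (f v)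

namespace Stmt10Aux

variable {M N : Type} (S : SigmaMonoid M) (T : SigmaMonoid N)

lemma zero_hom : SigmaHom S T (fun _ => T.zero) :=
  ⟨rfl, fun _ _ _ => T.sum_unit _ 0 (fun _ _ => rfl)⟩

lemma partA (f : ℕ → M → N) (hf : ∀ i, SigmaHom S T (f i))
    (g : M → N) (hg : ∀ x, T.sum (fun i => f i x) = some (g x)) :
    SigmaHom S T g := by
  constructor
  · have h1 : T.sum (fun i => f i S.zero) = some T.zero := by
      rw [show (fun i => f i S.zero) = fun _ => T.zero from funext (fun i => (hf i).1)]
      exact T.sum_unit _ 0 (fun _ _ => rfl)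
    exact Option.some_injective _ ((hg S.zero).symm.trans h1)
  · intro x v hxv
    set e : ℕ × ℕ ≃ ℕ := Denumerable.eqv (ℕ × ℕ) with he
    set X : ℕ → N := fun m => f (e.symm m).1 (x (e.symm m).2) with hX
    have hXe : ∀ j k, X (e (j, k)) = f j (x k) := by
      intro j k; simp [hX]
    have h1 : T.sum X = some (g v) := by
      have := T.sum_assoc e X (fun j => f j v) (fun j => by
        have := (hf j).2 x v hxv
        simpa [hXe] using this)
      rw [this, hg v]
    have h2 : T.sum X = T.sum (fun i => g (x i)) := by
      refine T.sum_assoc ((Equiv.prodComm ℕ ℕ).trans e) X (fun i => g (x i)) (fun i => ?_)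
      simpa [hXe] using hg (x i)
    rw [← h2, h1]

open Classical in
noncomputable def pSum (F : ℕ → {f : M → N // SigmaHom S T f}) :
    Option {f : M → N // SigmaHom S T f} :=
  if h : ∀ x, ∃ w, T.sum (fun i => (F i).1 x) = some w then
    some ⟨fun x => (h x).choose,
      partA S T (fun i => (F i).1) (fun i => (F i).2) _ (fun x => (h x).choose_spec)⟩
  else none

lemma pSum_some_iff (F : ℕ → {f : M → N // SigmaHom S T f}) (G) :
    pSum S T F = some G ↔ ∀ x, T.sum (fun i => (F i).1 x) = some (G.1 x) := by
  constructor
  · intro h x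
    unfold pSum at h
    split_ifs at h with hc
    · have := (hc x).choose_spec
      have hG : G.1 x = (hc x).choose := by
        have := congrArg (fun o => o.map Subtype.val) h
        simp at this
        rw [← this]
      rw [hG]; exact this
  · intro h
    have hc : ∀ x, ∃ w, T.sum (fun i => (F i).1 x) = some w := fun x => ⟨_, h x⟩
    unfold pSum
    rw [dif_pos hc]
    congr 1
    ext x
    exact Option.some_injective _ (((hc x).choose_spec).symm.trans (h x))

lemma pSum_none_iff (F : ℕ → {f : M → N // SigmaHom S T f}) :
    pSum S T F = none ↔ ∃ x, T.sum (fun i => (F i).1 x) = none := by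
  unfold pSum
  split_ifs with hc
  · simp only [false_iff]
    push_neg
    intro x hx
    obtain ⟨w, hw⟩ := hc x
    rw [hx] at hw; exact (Option.some_ne_none w hw.symm).elim
  · simp only [true_iff]
    push_neg at hc
    obtain ⟨x, hx⟩ := hc
    exact ⟨x, Option.eq_none_iff_forall_not_mem.2 (fun w hw => hx w hw)⟩

lemma pSum_congr (F G : ℕ → {f : M → N // SigmaHom S T f})
    (h : ∀ x, T.sum (fun i => (F i).1 x) = T.sum (fun i => (G i).1 x)) :
    pSum S T F = pSum S T G := by
  cases hG : pSum S T G with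
  | none =>
    rw [pSum_none_iff]
    obtain ⟨x, hx⟩ := (pSum_none_iff S T G).1 hG
    exact ⟨x, (h x).trans hx⟩
  | some G' =>
    rw [pSum_some_iff]
    intro x
    exact (h x).trans ((pSum_some_iff S T G G').1 hG x)

end Stmt10Aux

/-- (a) A pointwise-defined countable sum of Σ-monoid homomorphisms is again a
Σ-monoid homomorphism; (b) the set of Σ-monoid homomorphisms `M → N`, with the
constant-zero map as zero and the pointwise partial sum (defined iff all the
pointwise sums are defined in `N`), is a Σ-monoid. -/
theorem stmt10 {M N : Type} (S : SigmaMonoid M) (T : SigmaMonoid N) :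
    (∀ f : ℕ → M → N, (∀ i, SigmaHom S T (f i)) →
      ∀ g : M → N, (∀ x, T.sum (fun i => f i x) = some (g x)) → SigmaHom S T g) ∧
    ∃ U : SigmaMonoid {f : M → N // SigmaHom S T f},
      (U.zero.1 = fun _ => T.zero) ∧
      ∀ (F : ℕ → {f : M → N // SigmaHom S T f}) (G : {f : M → N // SigmaHom S T f}),
        U.sum F = some G ↔ ∀ x, T.sum (fun i => (F i).1 x) = some (G.1 x) := by
  open Stmt10Aux in
  refine ⟨partA S T, ⟨{
      zero := ⟨fun _ => T.zero, zero_hom S T⟩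
      sum := pSum S T
      sum_unit := ?_
      sum_perm := ?_
      sum_assoc := ?_
      sum_assoc_inner := ?_ }, rfl, fun F G => pSum_some_iff S T F G⟩⟩
  · intro F j hF
    rw [pSum_some_iff]
    intro x
    refine T.sum_unit _ j (fun i hi => ?_)
    rw [hF i hi]
  · intro I J σ F G hF hG hσ
    refine pSum_congr S T F G (fun x => ?_)
    refine T.sum_perm I J σ _ _ (fun i hi => by rw [hF i hi]) (fun j hj => by rw [hG j hj])
      (fun i => by rw [hσ i])
  · intro σ F s hinner
    refine pSum_congr S T F s (fun x => ?_)
    exact T.sum_assoc σ _ (fun j => (s j).1 x)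
      (fun j => (pSum_some_iff S T _ _).1 (hinner j) x)
  · intro σ F G hFG j
    have hc : ∀ x, ∃ w, T.sum (fun k => (F (σ (j, k))).1 x) = some w := fun x =>
      T.sum_assoc_inner σ (fun i => (F i).1 x) (G.1 x) ((pSum_some_iff S T F G).1 hFG x) j
    cases hp : pSum S T (fun k => F (σ (j, k))) with
    | none =>
      obtain ⟨x, hx⟩ := (pSum_none_iff S T _).1 hp
      obtain ⟨w, hw⟩ := hc x
      rw [hx] at hw; exact (Option.some_ne_none w hw.symm).elim
    | some w => exact ⟨w, rfl⟩
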